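/- There exists a Nonogram on an 11×11 grid (the AND gadget) with three designated cells a, b and c such that the set of values taken on (a,b,c) over all solutions (writing 1 for black and 0 for white) is exactly {(0,0,1),(1,0,1),(0,1,1),(1,1,0),(1,1,1)}, and each of these five triples is attained by exactly one solution. -/

import Mathlib

set_option maxRecDepth 8000


/-! Nonograms.  A cell is `true` when black. -/

namespace Nonogram

/-- The lengths of the maximal runs of consecutive black (`true`) cells of a line. -/
def runs (l : List Bool) : List ℕ :=
  ((l.splitOnP fun b => !b).map List.length).filter fun k => k ≠ 0

/-- A solution of the Nonogram with row descriptions `rowD` and column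
descriptions `colD`: every row and every column adheres to its description. -/
def IsSol {m n : ℕ} (rowD : Fin m → List ℕ) (colD : Fin n → List ℕ)
    (cells : Fin m → Fin n → Bool) : Prop :=
  (∀ i, runs (List.ofFn fun j => cells i j) = rowD i) ∧
  (∀ j, runs (List.ofFn fun i => cells i j) = colD j)

end Nonogram

namespace AndGadget

open Nonogram

abbrev B4 := Bool × Bool × Bool × Bool

def rowD : Fin 11 → List ℕ :=
  ![[1,1], [5,2,1], [11], [11], [11], [11], [11], [11], [11], [1,1,1], [1,1,2]]

def colD : Fin 11 → List ℕ :=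
  ![[9], [8], [8,1], [9], [8,1], [7], [9], [8,1], [9], [1,7], [8]]

/-- The column pattern: top two cells, seven black middle cells, bottom two cells. -/
def colPat (s : B4) : List Bool :=
  [s.1, s.2.1, true, true, true, true, true, true, true, s.2.2.1, s.2.2.2]

/-- Candidate (top, top, bottom, bottom) states for each column. -/
def Ls : List (List B4) :=
  [[(false, false, true, true), (false, true, true, false), (true, true, false, false)],
   [(false, false, true, false), (false, true, false, false)],
   [(false, true, false, true)],
   [(false, false, true, true), (false, true, true, false), (true, true, false, false)],
   [(false, true, false, true)],
   [(false, false, false, false)],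
   [(false, false, true, true), (false, true, true, false), (true, true, false, false)],
   [(false, true, false, true)],
   [(false, false, true, true), (false, true, true, false), (true, true, false, false)],
   [(true, false, false, false)],
   [(false, false, true, false), (false, true, false, false)]]

def s1 : Fin 11 → B4 := ![(false, true, true, false), (false, true, false, false), (false, true, false, true), (false, true, true, false), (false, true, false, true), (false, false, false, false), (true, true, false, false), (false, true, false, true), (false, false, true, true), (true, false, false, false), (false, true, false, false)]
def s2 : Fin 11 → B4 := ![(false, true, true, false), (false, true, false, false), (false, true, false, true), (true, true, false, false), (false, true, false, true), (false, false, false, false), (false, false, true, true), (false, true, false, true), (false, true, true, false), (true, false, false, false), (false, true, false, false)]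
def s3 : Fin 11 → B4 := ![(false, true, true, false), (false, true, false, false), (false, true, false, true), (true, true, false, false), (false, true, false, true), (false, false, false, false), (false, true, true, false), (false, true, false, true), (false, false, true, true), (true, false, false, false), (false, true, false, false)]
def s4 : Fin 11 → B4 := ![(true, true, false, false), (false, true, false, false), (false, true, false, true), (false, true, true, false), (false, true, false, true), (false, false, false, false), (false, false, true, true), (false, true, false, true), (false, true, true, false), (true, false, false, false), (false, true, false, false)]
def s5 : Fin 11 → B4 := ![(true, true, false, false), (false, true, false, false), (false, true, false, true), (false, true, true, false), (false, true, false, true), (false, false, false, false), (false, true, true, false), (false, true, false, true), (false, false, true, true), (true, false, false, false), (false, true, false, false)]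

def F1 : List B4 := [(false, true, true, false), (false, true, false, false), (false, true, false, true), (false, true, true, false), (false, true, false, true), (false, false, false, false), (true, true, false, false), (false, true, false, true), (false, false, true, true), (true, false, false, false), (false, true, false, false)]
def F2 : List B4 := [(false, true, true, false), (false, true, false, false), (false, true, false, true), (true, true, false, false), (false, true, false, true), (false, false, false, false), (false, false, true, true), (false, true, false, true), (false, true, true, false), (true, false, false, false), (false, true, false, false)]
def F3 : List B4 := [(false, true, true, false), (false, true, false, false), (false, true, false, true), (true, true, false, false), (false, true, false, true), (false, false, false, false), (false, true, true, false), (false, true, false, true), (false, false, true, true), (true, false, false, false), (false, true, false, false)]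
def F4 : List B4 := [(true, true, false, false), (false, true, false, false), (false, true, false, true), (false, true, true, false), (false, true, false, true), (false, false, false, false), (false, false, true, true), (false, true, false, true), (false, true, true, false), (true, false, false, false), (false, true, false, false)]
def F5 : List B4 := [(true, true, false, false), (false, true, false, false), (false, true, false, true), (false, true, true, false), (false, true, false, true), (false, false, false, false), (false, true, true, false), (false, true, false, true), (false, false, true, true), (true, false, false, false), (false, true, false, false)]

/-- The grid determined by a choice of column states (middle rows all black). -/
def gridOf (s : Fin 11 → B4) : Fin 11 → Fin 11 → Bool := fun i j =>
  (colPat (s j)).getD (i : ℕ) true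

lemma runs_cons_false (l : List Bool) : runs (false :: l) = runs l := by
  unfold runs
  rw [List.splitOnP_cons]
  simp

lemma runs_cons_true_sum (l : List Bool) :
    (runs (true :: l)).sum = (runs l).sum + 1 := by
  obtain ⟨c, cs, hc⟩ := List.exists_cons_of_ne_nil (List.splitOnP_ne_nil _ l)
  unfold runs
  rw [List.splitOnP_cons, hc]
  simp only [Bool.not_true, if_false, List.modifyHead, List.map_cons, List.filter_cons]
  by_cases hcl : c.length = 0 <;> simp [hcl] <;> omega

lemma runs_sum_le (l : List Bool) : (runs l).sum ≤ l.length := by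
  induction l with
  | nil => simp [runs]
  | cons b t ih =>
    cases b
    · rw [runs_cons_false]; simpa using Nat.le_succ_of_le ih
    · rw [runs_cons_true_sum]; simpa using ih

lemma runs_sum_eq (l : List Bool) (h : (runs l).sum = l.length) : ∀ b ∈ l, b = true := by
  induction l with
  | nil => simp
  | cons b t ih =>
    cases b
    · rw [runs_cons_false] at h
      have := runs_sum_le t
      simp at h
      omega
    · rw [runs_cons_true_sum] at h
      simp at h
      intro x hx
      rcases List.mem_cons.mp hx with rfl | hx'
      · rfl
      · exact ih h x hx'

lemma full_row {v : Fin 11 → Bool} (h : runs (List.ofFn v) = [11]) : ∀ j, v j = true := by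
  have hs : (runs (List.ofFn v)).sum = (List.ofFn v).length := by
    rw [h]; simp
  intro j
  exact runs_sum_eq _ hs (v j) (List.mem_ofFn.mpr ⟨j, rfl⟩)

lemma col_mem : ∀ j : Fin 11, ∀ t1 t2 b1 b2 : Bool,
    runs (colPat (t1, t2, b1, b2)) = colD j → (t1, t2, b1, b2) ∈ Ls.getD (j : ℕ) [] := by
  decide

set_option synthInstance.maxHeartbeats 1000000 in
set_option synthInstance.maxSize 512 in
lemma sec_filter : ∀ l ∈ Ls.sections,
    runs (l.map (·.1)) = [1,1] →
    runs (l.map fun s => s.2.1) = [5,2,1] →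
    runs (l.map fun s => s.2.2.1) = [1,1,1] →
    runs (l.map fun s => s.2.2.2) = [1,1,2] →
    l = F1 ∨ l = F2 ∨ l = F3 ∨ l = F4 ∨ l = F5 := by
  decide

lemma key (cells : Fin 11 → Fin 11 → Bool) (h : IsSol rowD colD cells) :
    cells = gridOf s1 ∨ cells = gridOf s2 ∨ cells = gridOf s3 ∨ cells = gridOf s4 ∨
      cells = gridOf s5 := by
  obtain ⟨hrow, hcol⟩ := h
  have h2 : ∀ j, cells 2 j = true := full_row (hrow 2)
  have h3 : ∀ j, cells 3 j = true := full_row (hrow 3)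
  have h4 : ∀ j, cells 4 j = true := full_row (hrow 4)
  have h5 : ∀ j, cells 5 j = true := full_row (hrow 5)
  have h6 : ∀ j, cells 6 j = true := full_row (hrow 6)
  have h7 : ∀ j, cells 7 j = true := full_row (hrow 7)
  have h8 : ∀ j, cells 8 j = true := full_row (hrow 8)
  set st : Fin 11 → B4 := fun j => (cells 0 j, cells 1 j, cells 9 j, cells 10 j) with hst
  have hcolpat : ∀ j, (List.ofFn fun i => cells i j) = colPat (st j) := by
    intro j
    show [cells 0 j, cells 1 j, cells 2 j, cells 3 j, cells 4 j, cells 5 j, cells 6 j,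
      cells 7 j, cells 8 j, cells 9 j, cells 10 j] = _
    rw [h2 j, h3 j, h4 j, h5 j, h6 j, h7 j, h8 j]
    rfl
  have hmem : ∀ j : Fin 11, st j ∈ Ls.getD (j : ℕ) [] := by
    intro j
    have h1 := hcol j
    rw [hcolpat j] at h1
    exact col_mem j _ _ _ _ h1
  have hsec : List.ofFn st ∈ Ls.sections := by
    rw [List.mem_sections]
    show List.Forall₂ (· ∈ ·) [st 0, st 1, st 2, st 3, st 4, st 5, st 6, st 7, st 8,
      st 9, st 10] Ls
    exact .cons (hmem 0) (.cons (hmem 1) (.cons (hmem 2) (.cons (hmem 3) (.cons (hmem 4)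
      (.cons (hmem 5) (.cons (hmem 6) (.cons (hmem 7) (.cons (hmem 8) (.cons (hmem 9)
      (.cons (hmem 10) .nil))))))))))
  have hr0 : runs ((List.ofFn st).map (·.1)) = [1,1] := by
    rw [List.map_ofFn]; exact hrow 0
  have hr1 : runs ((List.ofFn st).map fun s => s.2.1) = [5,2,1] := by
    rw [List.map_ofFn]; exact hrow 1
  have hr9 : runs ((List.ofFn st).map fun s => s.2.2.1) = [1,1,1] := by
    rw [List.map_ofFn]; exact hrow 9
  have hr10 : runs ((List.ofFn st).map fun s => s.2.2.2) = [1,1,2] := by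
    rw [List.map_ofFn]; exact hrow 10
  have hfive := sec_filter _ hsec hr0 hr1 hr9 hr10
  have hcg : ∀ s : Fin 11 → B4, st = s → cells = gridOf s := by
    rintro s rfl
    funext i j
    fin_cases i <;>
      first
        | rfl
        | exact h2 j | exact h3 j | exact h4 j | exact h5 j | exact h6 j
        | exact h7 j | exact h8 j
  have e1 : F1 = List.ofFn s1 := by decide
  have e2 : F2 = List.ofFn s2 := by decide
  have e3 : F3 = List.ofFn s3 := by decide
  have e4 : F4 = List.ofFn s4 := by decide
  have e5 : F5 = List.ofFn s5 := by decide
  rcases hfive with h | h | h | h | h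
  · exact Or.inl (hcg _ (List.ofFn_injective (h.trans e1)))
  · exact Or.inr (Or.inl (hcg _ (List.ofFn_injective (h.trans e2))))
  · exact Or.inr (Or.inr (Or.inl (hcg _ (List.ofFn_injective (h.trans e3)))))
  · exact Or.inr (Or.inr (Or.inr (Or.inl (hcg _ (List.ofFn_injective (h.trans e4))))))
  · exact Or.inr (Or.inr (Or.inr (Or.inr (hcg _ (List.ofFn_injective (h.trans e5))))))

lemma sol1 : IsSol rowD colD (gridOf s1) := ⟨by decide, by decide⟩
lemma sol2 : IsSol rowD colD (gridOf s2) := ⟨by decide, by decide⟩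
lemma sol3 : IsSol rowD colD (gridOf s3) := ⟨by decide, by decide⟩
lemma sol4 : IsSol rowD colD (gridOf s4) := ⟨by decide, by decide⟩
lemma sol5 : IsSol rowD colD (gridOf s5) := ⟨by decide, by decide⟩

end AndGadget

open Nonogram in
/-- The AND gadget: there is an `11 × 11` Nonogram with three designated cells
`a`, `b`, `c` such that the set of values taken on `(a, b, c)` over all solutions
(`true` for black, `false` for white) is exactly
`{(0,0,1), (1,0,1), (0,1,1), (1,1,0), (1,1,1)}`, each of these five triples being
attained by exactly one solution. -/
theorem nonogram_and_gadget :
    ∃ (rowD colD : Fin 11 → List ℕ) (a b c : Fin 11 × Fin 11),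
      a ≠ b ∧ a ≠ c ∧ b ≠ c ∧
      (∀ cells : Fin 11 → Fin 11 → Bool, IsSol rowD colD cells →
        (cells a.1 a.2, cells b.1 b.2, cells c.1 c.2) ∈
          ({(false, false, true), (true, false, true), (false, true, true),
            (true, true, false), (true, true, true)} : Set (Bool × Bool × Bool))) ∧
      (∀ t ∈ ({(false, false, true), (true, false, true), (false, true, true),
            (true, true, false), (true, true, true)} : Set (Bool × Bool × Bool)),
        ∃! cells : Fin 11 → Fin 11 → Bool,
          IsSol rowD colD cells ∧
          (cells a.1 a.2, cells b.1 b.2, cells c.1 c.2) = t) := by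
  classical
  refine ⟨AndGadget.rowD, AndGadget.colD, (1, 6), (9, 0), (9, 6), by decide, by decide,
    by decide, ?_, ?_⟩
  · intro cells h
    rcases AndGadget.key cells h with rfl | rfl | rfl | rfl | rfl <;>
      · simp only [Set.mem_insert_iff, Set.mem_singleton_iff]
        decide
  · intro t ht
    have hkey := AndGadget.key
    simp only [Set.mem_insert_iff, Set.mem_singleton_iff] at ht
    rcases ht with rfl | rfl | rfl | rfl | rfl
    · refine ⟨AndGadget.gridOf AndGadget.s4, ⟨AndGadget.sol4, by decide⟩, ?_⟩
      rintro y ⟨hy, hyt⟩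
      rcases hkey y hy with rfl | rfl | rfl | rfl | rfl <;>
        first | rfl | exact absurd hyt (by decide)
    · refine ⟨AndGadget.gridOf AndGadget.s5, ⟨AndGadget.sol5, by decide⟩, ?_⟩
      rintro y ⟨hy, hyt⟩
      rcases hkey y hy with rfl | rfl | rfl | rfl | rfl <;>
        first | rfl | exact absurd hyt (by decide)
    · refine ⟨AndGadget.gridOf AndGadget.s2, ⟨AndGadget.sol2, by decide⟩, ?_⟩
      rintro y ⟨hy, hyt⟩
      rcases hkey y hy with rfl | rfl | rfl | rfl | rfl <;>
        first | rfl | exact absurd hyt (by decide)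
    · refine ⟨AndGadget.gridOf AndGadget.s1, ⟨AndGadget.sol1, by decide⟩, ?_⟩
      rintro y ⟨hy, hyt⟩
      rcases hkey y hy with rfl | rfl | rfl | rfl | rfl <;>
        first | rfl | exact absurd hyt (by decide)
    · refine ⟨AndGadget.gridOf AndGadget.s3, ⟨AndGadget.sol3, by decide⟩, ?_⟩
      rintro y ⟨hy, hyt⟩
      rcases hkey y hy with rfl | rfl | rfl | rfl | rfl <;>
        first | rfl | exact absurd hyt (by decide)
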